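/- Let f : [0,1] × ℝᵖ → ℝ be given by f(t,z) = maxᵢ (zᵢ + t·λᵢ + cᵢ) for finitely many fixed real constants λᵢ, cᵢ (i ∈ I, I finite nonempty). Then the marginal g(z) = inf_{t∈[0,1]} f(t,z) is a convex piecewise-linear function of z ∈ ℝᵖ. Moreover g is nondecreasing in each coordinate and satisfies g(z₁+C,…,z_p+C) = g(z) + C for every real constant C. -/

import Mathlib

open Finset

private noncomputable def pF {ι : Type*} (lam c : ι → ℝ) (p : ι × ι) (z : ι → ℝ) : ℝ :=
  if lam p.1 < 0 ∧ 0 < lam p.2 then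
    (lam p.2 * (z p.1 + c p.1) - lam p.1 * (z p.2 + c p.2)) / (lam p.2 - lam p.1)
  else z p.1 + c p.1 + min (lam p.1) 0

private noncomputable def pA {ι : Type*} [DecidableEq ι] (lam : ι → ℝ) (p : ι × ι) (k : ι) : ℝ :=
  if lam p.1 < 0 ∧ 0 < lam p.2 then
    (lam p.2 * (if p.1 = k then 1 else 0) - lam p.1 * (if p.2 = k then 1 else 0)) /
      (lam p.2 - lam p.1)
  else if p.1 = k then 1 else 0

private noncomputable def pB {ι : Type*} (lam c : ι → ℝ) (p : ι × ι) : ℝ :=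
  if lam p.1 < 0 ∧ 0 < lam p.2 then
    (lam p.2 * c p.1 - lam p.1 * c p.2) / (lam p.2 - lam p.1)
  else c p.1 + min (lam p.1) 0

private lemma pF_eq {ι : Type*} [Fintype ι] [DecidableEq ι] (lam c : ι → ℝ) (p : ι × ι)
    (z : ι → ℝ) : pF lam c p z = pB lam c p + ∑ k, pA lam p k * z k := by
  by_cases hp : lam p.1 < 0 ∧ 0 < lam p.2
  · simp only [pF, pA, pB, if_pos hp]
    have h1 : ∀ k, (lam p.2 * (if p.1 = k then (1:ℝ) else 0) -
        lam p.1 * (if p.2 = k then 1 else 0)) / (lam p.2 - lam p.1) * z k =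
        (lam p.2 * ((if p.1 = k then (1:ℝ) else 0) * z k) -
        lam p.1 * ((if p.2 = k then (1:ℝ) else 0) * z k)) / (lam p.2 - lam p.1) := fun k => by
      ring
    rw [Finset.sum_congr rfl (fun k _ => h1 k), ← Finset.sum_div, Finset.sum_sub_distrib,
      ← Finset.mul_sum, ← Finset.mul_sum]
    simp only [ite_mul, one_mul, zero_mul, Finset.sum_ite_eq, Finset.mem_univ, if_true]
    rw [← add_div]
    congr 1
    ring
  · simp only [pF, pA, pB, if_neg hp, ite_mul, one_mul, zero_mul, Finset.sum_ite_eq,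
      Finset.mem_univ, if_true]
    ring

private lemma pA_nonneg {ι : Type*} [DecidableEq ι] (lam : ι → ℝ) (p : ι × ι) (k : ι) :
    0 ≤ pA lam p k := by
  by_cases hp : lam p.1 < 0 ∧ 0 < lam p.2
  · simp only [pA, if_pos hp]
    have hD : 0 < lam p.2 - lam p.1 := by linarith [hp.1, hp.2]
    apply div_nonneg _ hD.le
    split_ifs <;> nlinarith [hp.1, hp.2]
  · simp only [pA, if_neg hp]
    split_ifs <;> norm_num

private lemma pA_sum {ι : Type*} [Fintype ι] [DecidableEq ι] (lam : ι → ℝ) (p : ι × ι) :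
    ∑ k, pA lam p k = 1 := by
  by_cases hp : lam p.1 < 0 ∧ 0 < lam p.2
  · simp only [pA, if_pos hp]
    have hD : (0:ℝ) < lam p.2 - lam p.1 := by linarith [hp.1, hp.2]
    rw [← Finset.sum_div, Finset.sum_sub_distrib, ← Finset.mul_sum, ← Finset.mul_sum]
    simp only [Finset.sum_ite_eq, Finset.mem_univ, if_true, mul_one]
    exact div_self hD.ne'
  · simp only [pA, if_neg hp, Finset.sum_ite_eq, Finset.mem_univ, if_true]

private lemma affine_convexOn {ι : Type*} [Fintype ι] (A : ι → ℝ) (B : ℝ) :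
    ConvexOn ℝ Set.univ (fun z : ι → ℝ => B + ∑ i, A i * z i) := by
  refine ⟨convex_univ, fun x _ y _ a b ha hb hab => le_of_eq ?_⟩
  have h1 : ∑ i, A i * (a • x + b • y) i = a * ∑ i, A i * x i + b * ∑ i, A i * y i := by
    rw [Finset.mul_sum, Finset.mul_sum, ← Finset.sum_add_distrib]
    exact Finset.sum_congr rfl fun i _ => by
      simp only [Pi.add_apply, Pi.smul_apply, smul_eq_mul]; ring
  simp only [smul_eq_mul]
  rw [h1]
  linear_combination B * hab.symm

private lemma sup'_convexOn {ι α : Type*} [Fintype ι] {s : Finset α} (hs : s.Nonempty)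
    (F : α → (ι → ℝ) → ℝ) (h : ∀ i ∈ s, ConvexOn ℝ Set.univ (F i)) :
    ConvexOn ℝ Set.univ (fun z => s.sup' hs fun i => F i z) := by
  classical
  revert h
  induction hs using Finset.Nonempty.cons_induction with
  | singleton a =>
    intro h
    simp only [Finset.sup'_singleton]
    exact h a (Finset.mem_singleton_self a)
  | cons a t ha ht ih =>
    intro h
    simp only [Finset.sup'_cons ht]
    exact (h a (Finset.mem_cons_self a t)).sup
      (ih fun i hi => h i (Finset.mem_cons_of_mem hi))

/-- The convex-analytic core of the non-Archimedean Kiselman minimum principle: for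
`f(t,z) = maxᵢ (zᵢ + t·λᵢ + cᵢ)` with finitely many constants `λᵢ, cᵢ`, the marginal
`g(z) = inf_{t∈[0,1]} f(t,z)` is convex and piecewise linear (a finite maximum of affine
functions), nondecreasing in each coordinate, and satisfies `g(z + C·𝟙) = g(z) + C`. -/
theorem stmt_10 {ι : Type*} [Fintype ι] [Nonempty ι] (lam c : ι → ℝ)
    (g : (ι → ℝ) → ℝ)
    (hg : ∀ z, g z = ⨅ t : Set.Icc (0:ℝ) 1,
      Finset.univ.sup' Finset.univ_nonempty fun i => z i + t.1 * lam i + c i) :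
    ConvexOn ℝ Set.univ g ∧
    (∃ (n : ℕ) (A : Fin (n + 1) → ι → ℝ) (B : Fin (n + 1) → ℝ),
      ∀ z, g z = Finset.univ.sup' Finset.univ_nonempty
        fun j => B j + ∑ i, A j i * z i) ∧
    (∀ z z' : ι → ℝ, z ≤ z' → g z ≤ g z') ∧
    (∀ (z : ι → ℝ) (C : ℝ), g (fun i => z i + C) = g z + C) := by
  classical
  haveI : Nonempty (Set.Icc (0:ℝ) 1) := ⟨⟨0, by norm_num⟩⟩
  -- Main claim: g equals the finite max of the pieces `pF`.
  have key : ∀ z, g z = Finset.univ.sup' Finset.univ_nonempty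
      (fun p : ι × ι => pF lam c p z) := by
    intro z
    rw [hg]
    set G := Finset.univ.sup' Finset.univ_nonempty (fun p : ι × ι => pF lam c p z) with hGdef
    have hlow : ∀ t : Set.Icc (0:ℝ) 1,
        G ≤ Finset.univ.sup' Finset.univ_nonempty fun i => z i + t.1 * lam i + c i := by
      intro t
      apply Finset.sup'_le
      intro p _
      obtain ⟨ht0, ht1⟩ := t.2
      have h1 : z p.1 + t.1 * lam p.1 + c p.1 ≤
          Finset.univ.sup' Finset.univ_nonempty fun i => z i + t.1 * lam i + c i :=
        Finset.le_sup' (fun i => z i + t.1 * lam i + c i) (Finset.mem_univ p.1)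
      have h2 : z p.2 + t.1 * lam p.2 + c p.2 ≤
          Finset.univ.sup' Finset.univ_nonempty fun i => z i + t.1 * lam i + c i :=
        Finset.le_sup' (fun i => z i + t.1 * lam i + c i) (Finset.mem_univ p.2)
      by_cases hp : lam p.1 < 0 ∧ 0 < lam p.2
      · simp only [pF, if_pos hp]
        rw [div_le_iff₀ (by linarith [hp.1, hp.2])]
        nlinarith [mul_le_mul_of_nonneg_left h1 hp.2.le,
          mul_le_mul_of_nonneg_left h2 (neg_nonneg.mpr hp.1.le)]
      · simp only [pF, if_neg hp]
        have hmin : min (lam p.1) 0 ≤ t.1 * lam p.1 := by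
          rcases le_or_gt 0 (lam p.1) with hl | hl
          · rw [min_eq_right hl]
            exact mul_nonneg ht0 hl
          · rw [min_eq_left hl.le]
            nlinarith
        linarith
    have hBdd : BddBelow (Set.range fun t : Set.Icc (0:ℝ) 1 =>
        Finset.univ.sup' Finset.univ_nonempty fun i => z i + t.1 * lam i + c i) := by
      refine ⟨G, ?_⟩
      rintro x ⟨t, rfl⟩
      exact hlow t
    apply le_antisymm
    · -- construct a good `t0 ∈ [0,1]`
      have hGi : ∀ i, z i + c i + min (lam i) 0 ≤ G := by
        intro i
        have h := Finset.le_sup' (fun p : ι × ι => pF lam c p z) (Finset.mem_univ (i, i))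
        rw [← hGdef] at h
        simp only [pF] at h
        rwa [if_neg (show ¬(lam i < 0 ∧ 0 < lam i) from
          fun h => absurd h.2 (not_lt.mpr h.1.le))] at h
      have hGij : ∀ i j, lam i < 0 → 0 < lam j →
          lam j * (z i + c i) - lam i * (z j + c j) ≤ G * (lam j - lam i) := by
        intro i j hi hj
        have hD : (0:ℝ) < lam j - lam i := by linarith
        have h := Finset.le_sup' (fun p : ι × ι => pF lam c p z) (Finset.mem_univ (i, j))
        rw [← hGdef] at h
        simp only [pF] at h
        rw [if_pos (show lam i < 0 ∧ 0 < lam j from ⟨hi, hj⟩)] at h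
        exact (div_le_iff₀ hD).mp h
      set T : Finset ℝ := insert 1 ((Finset.univ.filter fun j => 0 < lam j).image
        fun j => (G - (z j + c j)) / lam j) with hT
      have hTne : T.Nonempty := ⟨1, Finset.mem_insert_self _ _⟩
      set t0 := T.min' hTne with ht0def
      have ht0le1 : t0 ≤ 1 := Finset.min'_le _ _ (Finset.mem_insert_self _ _)
      have ht0nn : 0 ≤ t0 := by
        apply Finset.le_min'
        intro y hy
        rcases Finset.mem_insert.mp hy with rfl | hy
        · norm_num
        · obtain ⟨j, hj, rfl⟩ := Finset.mem_image.mp hy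
          have hjpos : 0 < lam j := (Finset.mem_filter.mp hj).2
          have hjG : z j + c j ≤ G := by
            have h := hGi j
            rw [min_eq_right hjpos.le] at h
            linarith
          exact div_nonneg (by linarith) hjpos.le
      have hmain : ∀ i, z i + t0 * lam i + c i ≤ G := by
        intro i
        rcases lt_trichotomy (lam i) 0 with hi | hi | hi
        · have h1 : (G - (z i + c i)) / lam i ≤ t0 := by
            apply Finset.le_min'
            intro y hy
            rcases Finset.mem_insert.mp hy with rfl | hy
            · rw [div_le_iff_of_neg hi]
              have h := hGi i
              rw [min_eq_left hi.le] at h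
              linarith
            · obtain ⟨j, hj, rfl⟩ := Finset.mem_image.mp hy
              have hjpos : 0 < lam j := (Finset.mem_filter.mp hj).2
              rw [div_le_iff_of_neg hi]
              have hk := hGij i j hi hjpos
              have hu : (G - (z j + c j)) / lam j * lam j = G - (z j + c j) :=
                div_mul_cancel₀ _ hjpos.ne'
              nlinarith [hk, hu, hjpos, hi]
          have h2 := (div_le_iff_of_neg hi).mp h1
          linarith
        · have h := hGi i
          simp only [hi, min_self, mul_zero, add_zero] at h ⊢
          linarith
        · have hmem : (G - (z i + c i)) / lam i ∈ T :=
            Finset.mem_insert_of_mem (Finset.mem_image_of_mem _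
              (Finset.mem_filter.mpr ⟨Finset.mem_univ i, hi⟩))
          have h1 : t0 ≤ (G - (z i + c i)) / lam i := Finset.min'_le _ _ hmem
          have h2 := (le_div_iff₀ hi).mp h1
          linarith
      exact ciInf_le_of_le hBdd ⟨t0, ht0nn, ht0le1⟩
        (Finset.sup'_le _ _ fun i _ => hmain i)
    · exact le_ciInf hlow
  -- reindex by `Fin (n+1)`
  obtain ⟨n, hn⟩ : ∃ n, Fintype.card (ι × ι) = n + 1 :=
    ⟨Fintype.card (ι × ι) - 1, (Nat.succ_pred_eq_of_pos Fintype.card_pos).symm⟩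
  have e : Fin (n + 1) ≃ ι × ι := (Fintype.equivFinOfCardEq hn).symm
  have key2 : ∀ z, g z = Finset.univ.sup' Finset.univ_nonempty
      (fun j : Fin (n + 1) => pB lam c (e j) + ∑ i, pA lam (e j) i * z i) := by
    intro z
    rw [key z]
    apply le_antisymm
    · apply Finset.sup'_le
      intro p _
      have h := Finset.le_sup'
        (fun j : Fin (n + 1) => pB lam c (e j) + ∑ i, pA lam (e j) i * z i)
        (Finset.mem_univ (e.symm p))
      rw [Equiv.apply_symm_apply] at h
      rw [pF_eq]
      exact h
    · apply Finset.sup'_le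
      intro j _
      rw [← pF_eq]
      exact Finset.le_sup' (fun p : ι × ι => pF lam c p z) (Finset.mem_univ (e j))
  refine ⟨?_, ⟨n, fun j => pA lam (e j), fun j => pB lam c (e j), key2⟩, ?_, ?_⟩
  · have hgeq : g = fun z => Finset.univ.sup' Finset.univ_nonempty
        fun j : Fin (n + 1) => pB lam c (e j) + ∑ i, pA lam (e j) i * z i := funext key2
    rw [hgeq]
    exact sup'_convexOn _ _ fun j _ => affine_convexOn _ _
  · intro z z' hz
    rw [key2 z, key2 z']
    apply Finset.sup'_le
    intro j _
    refine le_trans ?_ (Finset.le_sup' _ (Finset.mem_univ j))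
    have h : ∑ i, pA lam (e j) i * z i ≤ ∑ i, pA lam (e j) i * z' i :=
      Finset.sum_le_sum fun i _ => mul_le_mul_of_nonneg_left (hz i) (pA_nonneg _ _ i)
    linarith
  · intro z C
    rw [key2 z, key2 (fun i => z i + C)]
    have hterm : ∀ j : Fin (n + 1),
        pB lam c (e j) + ∑ i, pA lam (e j) i * (z i + C) =
        (pB lam c (e j) + ∑ i, pA lam (e j) i * z i) + C := by
      intro j
      have h1 : ∑ i, pA lam (e j) i * (z i + C) =
          ∑ i, pA lam (e j) i * z i + (∑ i, pA lam (e j) i) * C := by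
        rw [Finset.sum_mul, ← Finset.sum_add_distrib]
        exact Finset.sum_congr rfl fun i _ => by ring
      rw [h1, pA_sum lam (e j)]
      ring
    rw [Finset.sup'_congr Finset.univ_nonempty rfl (fun j _ => hterm j)]
    exact (Finset.comp_sup'_eq_sup'_comp _ (· + C)
      (fun x y => (max_add_add_right x y C).symm)).symm
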